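/- Let F : ℕ → ℂ satisfy ‖F(n)‖ ≤ 1 for all n ≥ 1. Suppose there exist a constant C > 0 and a finite set S of pairs of prime numbers such that for all primes p ≠ q with (p,q) ∉ S one has limsup_{M→∞} (1/M)·‖∑_{m=1}^{M} F(p·m)·conj(F(q·m))‖ ≤ C/(p·q). Then (1/N)·∑_{n=1}^{N} μ(n)·F(n) → 0 as N → ∞. -/

import Mathlib

open Finset Filter


lemma sum_filter_dvd {M : Type*} [AddCommMonoid M] (f : ℕ → M) (d N : ℕ) (hd : 0 < d) :
    ∑ n ∈ (Icc 1 N).filter (fun n => d ∣ n), f n = ∑ m ∈ Icc 1 (N / d), f (d * m) := by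
  refine Finset.sum_bij' (fun n _ => n / d) (fun m _ => d * m) ?_ ?_ ?_ ?_ ?_
  · intro n hn
    simp only [mem_filter, mem_Icc] at hn
    obtain ⟨⟨h1, h2⟩, h3⟩ := hn
    simp only [mem_Icc]
    exact ⟨Nat.one_le_div_iff hd |>.mpr (Nat.le_of_dvd h1 h3), Nat.div_le_div_right h2⟩
  · intro m hm
    simp only [mem_Icc] at hm
    simp only [mem_filter, mem_Icc]
    refine ⟨⟨Nat.one_le_iff_ne_zero.mpr (Nat.mul_ne_zero hd.ne' (by omega)), ?_⟩, Dvd.intro m rfl⟩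
    exact (Nat.le_div_iff_mul_le hd).mp hm.2 |>.trans_eq' (mul_comm m d)
  · intro n hn
    simp only [mem_filter] at hn
    exact Nat.mul_div_cancel' hn.2
  · intro m hm
    exact Nat.mul_div_cancel_left m hd
  · intro n hn
    simp only [mem_filter] at hn
    rw [Nat.mul_div_cancel' hn.2]

lemma card_filter_dvd (d N : ℕ) (hd : 0 < d) :
    ((Icc 1 N).filter (fun n => d ∣ n)).card = N / d := by
  have := sum_filter_dvd (M := ℕ) (fun _ => 1) d N hd
  simpa using this

lemma natdiv_lb (N d : ℕ) (hd : 0 < d) : (N : ℝ) / d - 1 ≤ ((N / d : ℕ) : ℝ) := by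
  have h := Nat.div_add_mod N d
  have h2 := Nat.mod_lt N hd
  have hc : (d : ℝ) * ((N / d : ℕ) : ℝ) + ((N % d : ℕ) : ℝ) = (N : ℝ) := by exact_mod_cast h
  have hc2 : ((N % d : ℕ) : ℝ) < d := by exact_mod_cast h2
  have hd' : (0:ℝ) < d := by exact_mod_cast hd
  rw [sub_le_iff_le_add, div_le_iff₀ hd']
  nlinarith

lemma norm_moebius_le (n : ℕ) : ‖((ArithmeticFunction.moebius n : ℤ) : ℂ)‖ ≤ 1 := by
  rw [Complex.norm_intCast]
  exact_mod_cast ArithmeticFunction.abs_moebius_le_one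

lemma cs_sum_le (s : Finset ℕ) (g : ℕ → ℝ) (hg : ∀ i ∈ s, 0 ≤ g i) :
    ∑ i ∈ s, g i ≤ Real.sqrt s.card * Real.sqrt (∑ i ∈ s, g i ^ 2) := by
  have h := Finset.sum_mul_sq_le_sq_mul_sq s (fun _ => 1) g
  simp only [one_mul, one_pow, Finset.sum_const, nsmul_eq_mul, mul_one] at h
  have h0 : 0 ≤ ∑ i ∈ s, g i := Finset.sum_nonneg hg
  calc ∑ i ∈ s, g i = Real.sqrt ((∑ i ∈ s, g i) ^ 2) := (Real.sqrt_sq h0).symm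
    _ ≤ Real.sqrt ((s.card : ℝ) * ∑ i ∈ s, g i ^ 2) := Real.sqrt_le_sqrt h
    _ = Real.sqrt s.card * Real.sqrt (∑ i ∈ s, g i ^ 2) := Real.sqrt_mul (by positivity) _


lemma reindexB (f : ℕ → ℂ) (P : Finset ℕ) (hP : ∀ p ∈ P, 0 < p) (N : ℕ) :
    ∑ p ∈ P, ∑ m ∈ Icc 1 (N / p), f (p * m)
      = ∑ n ∈ Icc 1 N, f n * ((P.filter (· ∣ n)).card : ℂ) := by
  calc ∑ p ∈ P, ∑ m ∈ Icc 1 (N / p), f (p * m)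
      = ∑ p ∈ P, ∑ n ∈ (Icc 1 N).filter (fun n => p ∣ n), f n :=
        Finset.sum_congr rfl fun p hp => (sum_filter_dvd f p N (hP p hp)).symm
    _ = ∑ p ∈ P, ∑ n ∈ Icc 1 N, if p ∣ n then f n else 0 := by
        simp [Finset.sum_filter]
    _ = ∑ n ∈ Icc 1 N, ∑ p ∈ P, if p ∣ n then f n else 0 := Finset.sum_comm
    _ = ∑ n ∈ Icc 1 N, f n * ((P.filter (· ∣ n)).card : ℂ) := by
        refine Finset.sum_congr rfl fun n _ => ?_
        rw [← Finset.sum_filter, Finset.sum_const, nsmul_eq_mul, mul_comm]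

lemma omega_eq (P : Finset ℕ) (n : ℕ) :
    (((P.filter (· ∣ n)).card : ℝ)) = ∑ p ∈ P, if p ∣ n then (1:ℝ) else 0 := by
  rw [Finset.sum_boole]

lemma TK (P : Finset ℕ) (K : ℕ) (hK : 1 ≤ K) (hP : ∀ p ∈ P, p.Prime ∧ K ≤ p) (N : ℕ) :
    ∑ n ∈ Icc 1 N, ((((P.filter (· ∣ n)).card : ℝ)) - (∑ p ∈ P, (1:ℝ)/p))^2
      ≤ N * (∑ p ∈ P, (1:ℝ)/p) + 2 * (∑ p ∈ P, (1:ℝ)/p) * P.card := by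
  set L : ℝ := ∑ p ∈ P, (1:ℝ)/p with hL
  have hppos : ∀ p ∈ P, 0 < p := fun p hp => (hP p hp).1.pos
  have hLpos : 0 ≤ L := Finset.sum_nonneg fun p hp => by positivity
  set W : ℕ → ℝ := fun n => ((P.filter (· ∣ n)).card : ℝ) with hW
  -- first moment
  have hS1 : ∑ n ∈ Icc 1 N, W n = ∑ p ∈ P, ((N / p : ℕ) : ℝ) := by
    simp only [hW, omega_eq]
    rw [Finset.sum_comm]
    refine Finset.sum_congr rfl fun p hp => ?_
    rw [Finset.sum_boole, card_filter_dvd p N (hppos p hp)]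
  have hS1l : (N : ℝ) * L - P.card ≤ ∑ n ∈ Icc 1 N, W n := by
    rw [hS1]
    have : ∀ p ∈ P, (N : ℝ) * (1/p) - 1 ≤ ((N / p : ℕ) : ℝ) := by
      intro p hp
      have := natdiv_lb N p (hppos p hp)
      rw [mul_one_div]; linarith
    calc (N:ℝ) * L - P.card = ∑ p ∈ P, ((N:ℝ) * (1/p) - 1) := by
          rw [Finset.sum_sub_distrib, ← Finset.mul_sum, Finset.sum_const, nsmul_eq_mul, mul_one]
      _ ≤ _ := Finset.sum_le_sum this
  -- second moment
  have hcard2 : ∀ p ∈ P, ∀ q ∈ P,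
      (((Icc 1 N).filter (fun n => p ∣ n ∧ q ∣ n)).card : ℝ)
        ≤ if q = p then (N:ℝ) * (1/p) else (N:ℝ) * (1/p) * (1/q) := by
    intro p hp q hq
    split_ifs with h
    · subst h
      have : ((Icc 1 N).filter (fun n => q ∣ n ∧ q ∣ n)) = (Icc 1 N).filter (fun n => q ∣ n) := by
        simp
      rw [this, card_filter_dvd q N (hppos q hq), mul_one_div]
      exact (Nat.cast_div_le).trans (by norm_num)
    · have hco : Nat.Coprime p q := (Nat.coprime_primes (hP p hp).1 (hP q hq).1).mpr (Ne.symm h)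
      have : ((Icc 1 N).filter (fun n => p ∣ n ∧ q ∣ n)) = (Icc 1 N).filter (fun n => p * q ∣ n) := by
        ext n
        simp only [Finset.mem_filter, and_congr_right_iff]
        intro _
        constructor
        · rintro ⟨h1, h2⟩; exact hco.mul_dvd_of_dvd_of_dvd h1 h2
        · intro h1; exact ⟨(dvd_mul_right p q).trans h1, (dvd_mul_left q p).trans h1⟩
      rw [this, card_filter_dvd (p*q) N (Nat.mul_pos (hppos p hp) (hppos q hq)), mul_one_div, mul_one_div, div_div]
      exact (Nat.cast_div_le).trans (by push_cast; norm_num)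
  have hS2 : ∑ n ∈ Icc 1 N, W n ^ 2 ≤ (N:ℝ) * L + N * L^2 := by
    have expand : ∑ n ∈ Icc 1 N, W n ^ 2
        = ∑ p ∈ P, ∑ q ∈ P, (((Icc 1 N).filter (fun n => p ∣ n ∧ q ∣ n)).card : ℝ) := by
      have h1 : ∀ n, W n ^ 2 = ∑ p ∈ P, ∑ q ∈ P, if p ∣ n ∧ q ∣ n then (1:ℝ) else 0 := by
        intro n
        rw [hW]
        simp only [omega_eq, sq, Finset.sum_mul_sum]
        refine Finset.sum_congr rfl fun p _ => Finset.sum_congr rfl fun q _ => ?_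
        by_cases h1 : p ∣ n <;> by_cases h2 : q ∣ n <;> simp [h1, h2]
      rw [Finset.sum_congr rfl fun n _ => h1 n, Finset.sum_comm]
      refine Finset.sum_congr rfl fun p _ => ?_
      rw [Finset.sum_comm]
      refine Finset.sum_congr rfl fun q _ => ?_
      rw [Finset.sum_boole]
    rw [expand]
    have hper : ∀ p ∈ P, ∑ q ∈ P, (((Icc 1 N).filter (fun n => p ∣ n ∧ q ∣ n)).card : ℝ)
        ≤ (N:ℝ) * (1/p) + (N:ℝ) * (1/p) * L := by
      intro p hp
      calc ∑ q ∈ P, (((Icc 1 N).filter (fun n => p ∣ n ∧ q ∣ n)).card : ℝ)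
          ≤ ∑ q ∈ P, (if q = p then (N:ℝ) * (1/p) else (N:ℝ) * (1/p) * (1/q)) :=
            Finset.sum_le_sum fun q hq => hcard2 p hp q hq
        _ ≤ ∑ q ∈ P, ((if q = p then (N:ℝ) * (1/p) else 0) + (N:ℝ) * (1/p) * (1/q)) := by
            refine Finset.sum_le_sum fun q hq => ?_
            have h1 : (0:ℝ) ≤ (N:ℝ) * (1/p) * (1/q) := by positivity
            split_ifs with h
            · linarith
            · rw [zero_add]
        _ = (N:ℝ) * (1/p) + (N:ℝ) * (1/p) * L := by
            rw [Finset.sum_add_distrib, Finset.sum_ite_eq' P p (fun _ => (N:ℝ) * (1/p)),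
              if_pos hp, ← Finset.mul_sum]
    calc ∑ p ∈ P, ∑ q ∈ P, (((Icc 1 N).filter (fun n => p ∣ n ∧ q ∣ n)).card : ℝ)
        ≤ ∑ p ∈ P, ((N:ℝ) * (1/p) + (N:ℝ) * (1/p) * L) := Finset.sum_le_sum hper
      _ = (N:ℝ) * L + N * L^2 := by
          have c1 : ∑ p ∈ P, (N:ℝ) * (1/p) = (N:ℝ) * L := by rw [← Finset.mul_sum]
          have c2 : ∑ p ∈ P, (N:ℝ) * (1/p) * L = (N:ℝ) * L * L := by rw [← Finset.sum_mul, c1]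
          rw [Finset.sum_add_distrib, c1, c2]
          ring
  -- expansion
  have e1 : ∑ n ∈ Icc 1 N, (W n - L)^2
      = (∑ n ∈ Icc 1 N, W n ^ 2) - 2 * L * (∑ n ∈ Icc 1 N, W n) + N * L^2 := by
    have h1 : ∀ n, (W n - L)^2 = W n ^ 2 - 2 * L * W n + L^2 := fun n => by ring
    rw [Finset.sum_congr rfl fun n _ => h1 n, Finset.sum_add_distrib, Finset.sum_sub_distrib,
      ← Finset.mul_sum, Finset.sum_const, Nat.card_Icc, nsmul_eq_mul]
    push_cast
    ring
  rw [e1]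
  nlinarith [hS2, hS1l, hLpos, Nat.cast_nonneg (α := ℝ) P.card]


lemma key (F : ℕ → ℂ) (hF : ∀ n, 1 ≤ n → ‖F n‖ ≤ 1) (C : ℝ) (hC : 0 < C)
    (P : Finset ℕ) (K : ℕ) (hK : 1 ≤ K) (hP : ∀ p ∈ P, p.Prime ∧ K ≤ p)
    (N : ℕ) (hN : 1 ≤ N) (hN2 : 2 * P.card ≤ N)
    (hcorr : ∀ p ∈ P, ∀ q ∈ P, p ≠ q →
      ‖∑ m ∈ Icc 1 (min (N/p) (N/q)), F (p*m) * (starRingEnd ℂ) (F (q*m))‖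
        ≤ 2*C/((p:ℝ)*q) * ((min (N/p) (N/q) : ℕ) : ℝ)) :
    (∑ p ∈ P, (1:ℝ)/p) * ‖∑ n ∈ Icc 1 N, ((ArithmeticFunction.moebius n : ℤ) : ℂ) * F n‖
      ≤ N * Real.sqrt (2 * (∑ p ∈ P, (1:ℝ)/p))
        + N * (∑ p ∈ P, (1:ℝ)/p) / K
        + N * Real.sqrt ((∑ p ∈ P, (1:ℝ)/p)/K + 2*C*(∑ p ∈ P, (1:ℝ)/p)^2/K^2) := by
  classical
  set L : ℝ := ∑ p ∈ P, (1:ℝ)/p with hL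
  have hLnn : 0 ≤ L := Finset.sum_nonneg fun p hp => by positivity
  have hppos : ∀ p ∈ P, 0 < p := fun p hp => (hP p hp).1.pos
  have hKpos : (0:ℝ) < K := by exact_mod_cast hK
  have hNpos : (0:ℝ) < N := by exact_mod_cast hN
  set mu : ℕ → ℂ := fun n => ((ArithmeticFunction.moebius n : ℤ) : ℂ) with hmu
  have hmuF : ∀ n, 1 ≤ n → ‖mu n * F n‖ ≤ 1 := by
    intro n hn
    rw [norm_mul]
    exact mul_le_one₀ (norm_moebius_le n) (norm_nonneg _) (hF n hn)
  set A : ℂ := ∑ n ∈ Icc 1 N, mu n * F n with hA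
  set B : ℂ := ∑ p ∈ P, ∑ m ∈ Icc 1 (N/p), mu (p*m) * F (p*m) with hB
  set B' : ℂ := ∑ p ∈ P, ∑ m ∈ Icc 1 (N/p), mu m * F (p*m) with hB'
  set W : ℕ → ℝ := fun n => ((P.filter (· ∣ n)).card : ℝ) with hW
  -- Step 1 : L * ‖A‖ ≤ ‖B‖ + N * sqrt (2 L)
  have step1 : L * ‖A‖ ≤ ‖B‖ + N * Real.sqrt (2 * L) := by
    have hBeq : B = ∑ n ∈ Icc 1 N, (mu n * F n) * ((P.filter (· ∣ n)).card : ℂ) :=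
      reindexB (fun n => mu n * F n) P hppos N
    have hdiff : (L:ℂ) * A - B = ∑ n ∈ Icc 1 N, mu n * F n * ((L : ℂ) - ((P.filter (· ∣ n)).card : ℂ)) := by
      rw [hBeq, hA, Finset.mul_sum, ← Finset.sum_sub_distrib]
      exact Finset.sum_congr rfl fun n _ => by ring
    have hnorm : ‖(L:ℂ) * A - B‖ ≤ ∑ n ∈ Icc 1 N, |L - W n| := by
      rw [hdiff]
      refine (norm_sum_le _ _).trans (Finset.sum_le_sum fun n hn => ?_)
      rw [norm_mul]
      have h1 : ‖(L : ℂ) - ((P.filter (· ∣ n)).card : ℂ)‖ = |L - W n| := by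
        have h2 : (L : ℂ) - ((P.filter (· ∣ n)).card : ℂ) = ((L - W n : ℝ) : ℂ) := by
          rw [hW]; push_cast; ring
        rw [h2, Complex.norm_real, Real.norm_eq_abs]
      rw [h1]
      have hn1 : 1 ≤ n := (Finset.mem_Icc.mp hn).1
      exact mul_le_of_le_one_left (abs_nonneg _) (hmuF n hn1)
    have habs : ∑ n ∈ Icc 1 N, |L - W n| ≤ N * Real.sqrt (2 * L) := by
      have hsq : ∀ n ∈ Icc 1 N, |L - W n| ^ 2 = (W n - L)^2 := by
        intro n _; rw [sq_abs]; ring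
      calc ∑ n ∈ Icc 1 N, |L - W n|
          ≤ Real.sqrt ((Icc 1 N).card) * Real.sqrt (∑ n ∈ Icc 1 N, |L - W n| ^ 2) :=
            cs_sum_le _ _ (fun n _ => abs_nonneg _)
        _ = Real.sqrt N * Real.sqrt (∑ n ∈ Icc 1 N, (W n - L)^2) := by
            rw [Nat.card_Icc, Finset.sum_congr rfl hsq]; norm_num
        _ ≤ Real.sqrt N * Real.sqrt (2 * N * L) := by
            refine mul_le_mul_of_nonneg_left (Real.sqrt_le_sqrt ?_) (Real.sqrt_nonneg _)
            have h3 := TK P K hK hP N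
            have h4 : 2 * L * P.card ≤ (N:ℝ) * L := by
              have : (2 * P.card : ℝ) ≤ N := by exact_mod_cast hN2
              nlinarith
            rw [← hL] at h3
            nlinarith
        _ = N * Real.sqrt (2 * L) := by
            rw [← Real.sqrt_mul (by positivity)]
            have h5 : (N:ℝ) * (2 * N * L) = (N:ℝ)^2 * (2 * L) := by ring
            rw [h5, Real.sqrt_mul (sq_nonneg _), Real.sqrt_sq hNpos.le]
    have hLA : ‖(L:ℂ) * A‖ = L * ‖A‖ := by
      rw [norm_mul, Complex.norm_real, Real.norm_eq_abs, abs_of_nonneg hLnn]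
    calc L * ‖A‖ = ‖(L:ℂ) * A‖ := hLA.symm
      _ = ‖B + ((L:ℂ) * A - B)‖ := by ring_nf
      _ ≤ ‖B‖ + ‖(L:ℂ) * A - B‖ := norm_add_le _ _
      _ ≤ ‖B‖ + N * Real.sqrt (2 * L) := by linarith
  -- Step 2 : ‖B + B'‖ ≤ N * L / K
  have step2 : ‖B + B'‖ ≤ N * L / K := by
    have heq : B + B' = ∑ p ∈ P, ∑ m ∈ Icc 1 (N/p), (mu (p*m) + mu m) * F (p*m) := by
      rw [hB, hB', ← Finset.sum_add_distrib]
      refine Finset.sum_congr rfl fun p _ => ?_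
      rw [← Finset.sum_add_distrib]
      exact Finset.sum_congr rfl fun m _ => by ring
    rw [heq]
    refine (norm_sum_le _ _).trans ?_
    have hper : ∀ p ∈ P, ‖∑ m ∈ Icc 1 (N/p), (mu (p*m) + mu m) * F (p*m)‖
        ≤ (N:ℝ)/K * (1/p) := by
      intro p hp
      have hpp := (hP p hp).1
      have hterm : ∀ m ∈ Icc 1 (N/p), ‖(mu (p*m) + mu m) * F (p*m)‖
          ≤ if p ∣ m then (1:ℝ) else 0 := by
        intro m hm
        have hm1 : 1 ≤ m := (Finset.mem_Icc.mp hm).1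
        have hpm1 : 1 ≤ p * m := Nat.one_le_iff_ne_zero.mpr
          (Nat.mul_ne_zero (hppos p hp).ne' (by omega))
        by_cases hd : p ∣ m
        · rw [if_pos hd]
          have hz : ¬ Squarefree (p * m) := by
            intro hsq
            have : p * p ∣ p * m := mul_dvd_mul_left p hd
            exact hpp.one_lt.ne' (Nat.isUnit_iff.mp (hsq p this))
          have : mu (p*m) = 0 := by
            rw [hmu]; simp [ArithmeticFunction.moebius_eq_zero_of_not_squarefree hz]
          rw [this, zero_add, norm_mul]
          exact mul_le_one₀ (norm_moebius_le m) (norm_nonneg _) (hF _ hpm1)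
        · rw [if_neg hd]
          have hco : Nat.Coprime p m := (Nat.Prime.coprime_iff_not_dvd hpp).mpr hd
          have hmul : ArithmeticFunction.moebius (p * m)
              = ArithmeticFunction.moebius p * ArithmeticFunction.moebius m :=
            ArithmeticFunction.isMultiplicative_moebius.map_mul_of_coprime hco
          have : mu (p*m) + mu m = 0 := by
            rw [hmu]
            simp only [hmul, ArithmeticFunction.moebius_apply_prime hpp]
            push_cast
            ring
          rw [this, zero_mul, norm_zero]
      refine (norm_sum_le _ _).trans ((Finset.sum_le_sum hterm).trans ?_)
      rw [Finset.sum_boole]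
      have hcard : ((Icc 1 (N/p)).filter (fun m => p ∣ m)).card = N / (p * p) := by
        rw [card_filter_dvd p (N/p) (hppos p hp), Nat.div_div_eq_div_mul]
      rw [hcard]
      have h1 : ((N / (p*p) : ℕ) : ℝ) ≤ (N:ℝ) / ((p:ℝ) * p) := by
        calc ((N / (p*p) : ℕ) : ℝ) ≤ (N:ℝ) / ((p*p : ℕ):ℝ) := Nat.cast_div_le
          _ = (N:ℝ) / ((p:ℝ)*p) := by push_cast; ring_nf
      refine h1.trans ?_
      have hpK : (K:ℝ) ≤ (p:ℝ) := by exact_mod_cast (hP p hp).2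
      have hpR : (0:ℝ) < p := by exact_mod_cast hppos p hp
      rw [div_mul_eq_mul_div, mul_one_div, div_div]
      gcongr
    refine (Finset.sum_le_sum hper).trans ?_
    rw [← Finset.mul_sum, ← hL, div_mul_eq_mul_div]
  -- Step 3 : ‖B'‖ ≤ N * sqrt (L/K + 2 C L²/K²)
  have step3 : ‖B'‖ ≤ N * Real.sqrt (L/K + 2*C*L^2/K^2) := by
    set M₀ : ℕ := N / K with hM₀
    have hfil : ∀ p ∈ P, (Icc 1 M₀).filter (fun m => p*m ≤ N) = Icc 1 (N/p) := by
      intro p hp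
      ext m
      simp only [Finset.mem_filter, Finset.mem_Icc]
      constructor
      · rintro ⟨⟨h1, _⟩, h3⟩
        exact ⟨h1, (Nat.le_div_iff_mul_le (hppos p hp)).mpr (by rwa [mul_comm])⟩
      · rintro ⟨h1, h2⟩
        have h3 : m * p ≤ N := (Nat.le_div_iff_mul_le (hppos p hp)).mp h2
        have h4 : m * K ≤ m * p := Nat.mul_le_mul_left m (hP p hp).2
        exact ⟨⟨h1, (Nat.le_div_iff_mul_le hK).mpr (h4.trans h3)⟩, by rwa [mul_comm]⟩
    set G : ℕ → ℂ := fun m => ∑ p ∈ P, if p*m ≤ N then F (p*m) else 0 with hG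
    have hB'eq : B' = ∑ m ∈ Icc 1 M₀, mu m * G m := by
      rw [hB']
      calc ∑ p ∈ P, ∑ m ∈ Icc 1 (N/p), mu m * F (p*m)
          = ∑ p ∈ P, ∑ m ∈ Icc 1 M₀, (if p*m ≤ N then mu m * F (p*m) else 0) := by
            refine Finset.sum_congr rfl fun p hp => ?_
            rw [← hfil p hp, Finset.sum_filter]
        _ = ∑ m ∈ Icc 1 M₀, ∑ p ∈ P, (if p*m ≤ N then mu m * F (p*m) else 0) := Finset.sum_comm
        _ = ∑ m ∈ Icc 1 M₀, mu m * G m := by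
            refine Finset.sum_congr rfl fun m _ => ?_
            rw [hG, Finset.mul_sum]
            exact Finset.sum_congr rfl fun p _ => by rw [mul_ite, mul_zero]
    have hnB' : ‖B'‖ ≤ ∑ m ∈ Icc 1 M₀, ‖G m‖ := by
      rw [hB'eq]
      refine (norm_sum_le _ _).trans (Finset.sum_le_sum fun m _ => ?_)
      rw [norm_mul]
      exact mul_le_of_le_one_left (norm_nonneg _) (norm_moebius_le m)
    -- correlation sums
    have hHsimp : ∀ p ∈ P, ∀ q ∈ P,
        ∑ m ∈ Icc 1 M₀, (if p*m ≤ N then F (p*m) else 0)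
            * (starRingEnd ℂ) (if q*m ≤ N then F (q*m) else 0)
          = ∑ m ∈ Icc 1 (min (N/p) (N/q)), F (p*m) * (starRingEnd ℂ) (F (q*m)) := by
      intro p hp q hq
      have hfil2 : (Icc 1 M₀).filter (fun m => p*m ≤ N ∧ q*m ≤ N)
          = Icc 1 (min (N/p) (N/q)) := by
        ext m
        simp only [Finset.mem_filter, Finset.mem_Icc, le_min_iff]
        constructor
        · rintro ⟨⟨h1, _⟩, h3, h4⟩
          exact ⟨h1, (Nat.le_div_iff_mul_le (hppos p hp)).mpr (by rwa [mul_comm]),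
            (Nat.le_div_iff_mul_le (hppos q hq)).mpr (by rwa [mul_comm])⟩
        · rintro ⟨h1, h2, h3⟩
          have h4 : m * p ≤ N := (Nat.le_div_iff_mul_le (hppos p hp)).mp h2
          have h5 : m * q ≤ N := (Nat.le_div_iff_mul_le (hppos q hq)).mp h3
          have h6 : m * K ≤ m * p := Nat.mul_le_mul_left m (hP p hp).2
          exact ⟨⟨h1, (Nat.le_div_iff_mul_le hK).mpr (h6.trans h4)⟩,
            by rwa [mul_comm], by rwa [mul_comm]⟩
      rw [← hfil2, Finset.sum_filter]
      refine Finset.sum_congr rfl fun m _ => ?_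
      by_cases h1 : p*m ≤ N <;> by_cases h2 : q*m ≤ N <;> simp [h1, h2]
    -- bound the sum of squares
    have hSig : ∑ m ∈ Icc 1 M₀, ‖G m‖^2 ≤ (N:ℝ)*L + 2*C*N*L^2/K := by
      have hGsq : ∀ m, (‖G m‖^2 : ℝ)
          = (∑ p ∈ P, ∑ q ∈ P, (if p*m ≤ N then F (p*m) else 0)
              * (starRingEnd ℂ) (if q*m ≤ N then F (q*m) else 0)).re := by
        intro m
        have h1 : (G m) * (starRingEnd ℂ) (G m)
            = ∑ p ∈ P, ∑ q ∈ P, (if p*m ≤ N then F (p*m) else 0)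
              * (starRingEnd ℂ) (if q*m ≤ N then F (q*m) else 0) := by
          rw [hG, map_sum, Finset.sum_mul_sum]
        have h2 : (‖G m‖^2 : ℝ) = ((G m) * (starRingEnd ℂ) (G m)).re := by
          rw [Complex.mul_conj, Complex.ofReal_re, Complex.normSq_eq_norm_sq]
        rw [h2, h1]
      calc ∑ m ∈ Icc 1 M₀, ‖G m‖^2
          = (∑ m ∈ Icc 1 M₀, ∑ p ∈ P, ∑ q ∈ P, (if p*m ≤ N then F (p*m) else 0)
              * (starRingEnd ℂ) (if q*m ≤ N then F (q*m) else 0)).re := by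
            rw [Complex.re_sum]
            exact Finset.sum_congr rfl fun m _ => hGsq m
        _ = (∑ p ∈ P, ∑ q ∈ P, ∑ m ∈ Icc 1 M₀, (if p*m ≤ N then F (p*m) else 0)
              * (starRingEnd ℂ) (if q*m ≤ N then F (q*m) else 0)).re := by
            rw [Finset.sum_comm]
            congr 1
            exact Finset.sum_congr rfl fun p _ => Finset.sum_comm
        _ ≤ ‖∑ p ∈ P, ∑ q ∈ P, ∑ m ∈ Icc 1 M₀, (if p*m ≤ N then F (p*m) else 0)
              * (starRingEnd ℂ) (if q*m ≤ N then F (q*m) else 0)‖ := Complex.re_le_norm _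
        _ ≤ ∑ p ∈ P, ∑ q ∈ P, ‖∑ m ∈ Icc 1 M₀, (if p*m ≤ N then F (p*m) else 0)
              * (starRingEnd ℂ) (if q*m ≤ N then F (q*m) else 0)‖ :=
            (norm_sum_le _ _).trans (Finset.sum_le_sum fun p _ => norm_sum_le _ _)
        _ ≤ ∑ p ∈ P, ((N:ℝ)*(1/p) + (2*C*N/K)*(1/p)*L) := by
            refine Finset.sum_le_sum fun p hp => ?_
            rw [← Finset.add_sum_erase _ _ hp]
            have hdiag : ‖∑ m ∈ Icc 1 M₀, (if p*m ≤ N then F (p*m) else 0)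
                * (starRingEnd ℂ) (if p*m ≤ N then F (p*m) else 0)‖ ≤ (N:ℝ)*(1/p) := by
              rw [hHsimp p hp p hp, min_self]
              refine (norm_sum_le _ _).trans ?_
              have hb : ∀ m ∈ Icc 1 (N/p), ‖F (p*m) * (starRingEnd ℂ) (F (p*m))‖ ≤ (1:ℝ) := by
                intro m hm
                have hm1 : 1 ≤ m := (Finset.mem_Icc.mp hm).1
                have hpm1 : 1 ≤ p * m := Nat.one_le_iff_ne_zero.mpr
                  (Nat.mul_ne_zero (hppos p hp).ne' (by omega))
                rw [norm_mul, RingHomIsometric.norm_map]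
                exact mul_le_one₀ (hF _ hpm1) (norm_nonneg _) (hF _ hpm1)
              refine (Finset.sum_le_sum hb).trans ?_
              rw [Finset.sum_const, Nat.card_Icc, nsmul_eq_mul, mul_one, mul_one_div]
              simpa using (Nat.cast_div_le (m := N) (n := p))
            have hoff : ∀ q ∈ P.erase p,
                ‖∑ m ∈ Icc 1 M₀, (if p*m ≤ N then F (p*m) else 0)
                  * (starRingEnd ℂ) (if q*m ≤ N then F (q*m) else 0)‖
                  ≤ (2*C*N/K)*(1/p)*(1/q) := by
              intro q hq'
              have hq := Finset.mem_of_mem_erase hq'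
              have hne : p ≠ q := (Finset.ne_of_mem_erase hq').symm
              rw [hHsimp p hp q hq]
              refine (hcorr p hp q hq hne).trans ?_
              have hqR : (0:ℝ) < q := by exact_mod_cast hppos q hq
              have hpR : (0:ℝ) < p := by exact_mod_cast hppos p hp
              have hKq : (K:ℝ) ≤ q := by exact_mod_cast (hP q hq).2
              have hmin : ((min (N/p) (N/q) : ℕ) : ℝ) ≤ (N:ℝ)/q := by
                calc ((min (N/p) (N/q) : ℕ) : ℝ) ≤ ((N/q : ℕ) : ℝ) := by
                      exact_mod_cast min_le_right _ _
                  _ ≤ (N:ℝ)/q := Nat.cast_div_le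
              calc 2*C/((p:ℝ)*q) * ((min (N/p) (N/q) : ℕ) : ℝ)
                  ≤ 2*C/((p:ℝ)*q) * ((N:ℝ)/q) := by
                    refine mul_le_mul_of_nonneg_left hmin (by positivity)
                _ = 2*C*N / ((p:ℝ)*q*q) := by field_simp
                _ ≤ 2*C*N / ((p:ℝ)*q*K) := by gcongr
                _ = (2*C*N/K)*(1/p)*(1/q) := by field_simp
            calc ‖∑ m ∈ Icc 1 M₀, (if p*m ≤ N then F (p*m) else 0)
                  * (starRingEnd ℂ) (if p*m ≤ N then F (p*m) else 0)‖
                + ∑ q ∈ P.erase p, ‖∑ m ∈ Icc 1 M₀, (if p*m ≤ N then F (p*m) else 0)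
                  * (starRingEnd ℂ) (if q*m ≤ N then F (q*m) else 0)‖
                ≤ (N:ℝ)*(1/p) + ∑ q ∈ P.erase p, (2*C*N/K)*(1/p)*(1/q) :=
                  add_le_add hdiag (Finset.sum_le_sum hoff)
              _ ≤ (N:ℝ)*(1/p) + (2*C*N/K)*(1/p)*L := by
                  refine add_le_add le_rfl ?_
                  calc ∑ q ∈ P.erase p, (2*C*N/K)*(1/p)*(1/q)
                      = (2*C*N/K)*(1/p) * ∑ q ∈ P.erase p, (1:ℝ)/q := by
                        rw [Finset.mul_sum]
                    _ ≤ (2*C*N/K)*(1/p) * L := by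
                        refine mul_le_mul_of_nonneg_left ?_ (by positivity)
                        rw [hL]
                        exact Finset.sum_le_sum_of_subset_of_nonneg (Finset.erase_subset p P)
                          (fun q _ _ => by positivity)
        _ = (N:ℝ)*L + 2*C*N*L^2/K := by
            rw [Finset.sum_add_distrib, ← Finset.mul_sum, ← hL]
            congr 1
            have c1 : ∀ q : ℕ, (2*C*N/K)*(1/(q:ℝ))*L = (2*C*N/K)*L*(1/q) := fun q => by ring
            rw [Finset.sum_congr rfl fun q _ => c1 q, ← Finset.mul_sum, ← hL]
            rw [sq]
            field_simp
    -- combine via Cauchy-Schwarz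
    have hcs : ∑ m ∈ Icc 1 M₀, ‖G m‖ ≤ Real.sqrt M₀ * Real.sqrt (∑ m ∈ Icc 1 M₀, ‖G m‖^2) := by
      have := cs_sum_le (Icc 1 M₀) (fun m => ‖G m‖) (fun m _ => norm_nonneg _)
      rwa [Nat.card_Icc, Nat.add_sub_cancel] at this
    have hM₀le : ((M₀ : ℕ) : ℝ) ≤ (N:ℝ)/K := by
      rw [hM₀]; exact Nat.cast_div_le
    have hSignn : 0 ≤ ∑ m ∈ Icc 1 M₀, ‖G m‖^2 := Finset.sum_nonneg fun m _ => by positivity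
    calc ‖B'‖ ≤ ∑ m ∈ Icc 1 M₀, ‖G m‖ := hnB'
      _ ≤ Real.sqrt M₀ * Real.sqrt (∑ m ∈ Icc 1 M₀, ‖G m‖^2) := hcs
      _ ≤ Real.sqrt ((N:ℝ)/K) * Real.sqrt ((N:ℝ)*L + 2*C*N*L^2/K) := by
          exact mul_le_mul (Real.sqrt_le_sqrt hM₀le) (Real.sqrt_le_sqrt hSig)
            (Real.sqrt_nonneg _) (Real.sqrt_nonneg _)
      _ = Real.sqrt (((N:ℝ)/K) * ((N:ℝ)*L + 2*C*N*L^2/K)) := (Real.sqrt_mul (by positivity) _).symm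
      _ = Real.sqrt ((N:ℝ)^2 * (L/K + 2*C*L^2/K^2)) := by
          congr 1
          field_simp
      _ = N * Real.sqrt (L/K + 2*C*L^2/K^2) := by
          rw [Real.sqrt_mul (sq_nonneg _), Real.sqrt_sq hNpos.le]
  have hBle : ‖B‖ ≤ N * L / K + ‖B'‖ := by
    calc ‖B‖ = ‖(B + B') - B'‖ := by ring_nf
      _ ≤ ‖B + B'‖ + ‖B'‖ := norm_sub_le _ _
      _ ≤ N * L / K + ‖B'‖ := by linarith
  linarith

/-- A correlation bound of size C/(p·q) for all but finitely many pairs of distinct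
primes implies non-correlation with the Möbius function on average. -/
theorem moebius_disjointness_of_correlation_bound
    (F : ℕ → ℂ) (hF : ∀ n, 1 ≤ n → ‖F n‖ ≤ 1)
    (C : ℝ) (hC : 0 < C) (S : Finset (ℕ × ℕ))
    (hS : ∀ pq ∈ S, pq.1.Prime ∧ pq.2.Prime)
    (hcorr : ∀ p q : ℕ, p.Prime → q.Prime → p ≠ q → (p, q) ∉ S →
      Filter.limsup
        (fun M : ℕ => (1 / (M : ℝ)) *
          ‖∑ m ∈ Finset.Icc 1 M, F (p * m) * (starRingEnd ℂ) (F (q * m))‖)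
        Filter.atTop ≤ C / (p * q)) :
    Filter.Tendsto
      (fun N : ℕ => (1 / (N : ℂ)) *
        ∑ n ∈ Finset.Icc 1 N, (ArithmeticFunction.moebius n : ℂ) * F n)
      Filter.atTop (nhds 0) := by
  rw [NormedAddCommGroup.tendsto_nhds_zero]
  intro ε hε
  -- choose K
  obtain ⟨K', hK'⟩ := exists_nat_ge
    (max (max (8/ε) (128/ε^2)) (Real.sqrt (256*C)/ε))
  set K : ℕ := K' + 1 with hKdef
  have hK1 : 1 ≤ K := by omega
  have hKR : (0:ℝ) < K := by exact_mod_cast hK1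
  have hKa : 8/ε ≤ (K:ℝ) := by
    have := (le_max_left _ _).trans ((le_max_left _ _).trans hK')
    rw [hKdef]; push_cast; linarith
  have hKb : 128/ε^2 ≤ (K:ℝ) := by
    have := (le_max_right _ _).trans ((le_max_left _ _).trans hK')
    rw [hKdef]; push_cast; linarith
  have hKc : Real.sqrt (256*C)/ε ≤ (K:ℝ) := by
    have := (le_max_right _ _).trans hK'
    rw [hKdef]; push_cast; linarith
  -- threshold avoiding S
  set K₀ : ℕ := max K (S.sup (fun s => max s.1 s.2) + 1) with hK₀def
  have hK₀K : K ≤ K₀ := le_max_left _ _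
  -- choose P by divergence of sum of prime reciprocals
  set f : ℕ → ℝ := fun n => if n.Prime ∧ K₀ ≤ n then 1/(n:ℝ) else 0 with hfdef
  have hf0 : ∀ n, 0 ≤ f n := by
    intro n
    rw [hfdef]
    dsimp only
    split_ifs
    · positivity
    · exact le_refl 0
  have hns : ¬ Summable f := by
    intro hsum
    apply not_summable_one_div_on_primes
    have hg : Summable (fun n : ℕ => if n.Prime ∧ n < K₀ then (1:ℝ)/n else 0) := by
      apply summable_of_ne_finset_zero (s := Finset.range K₀)
      intro n hn
      rw [Finset.mem_range, not_lt] at hn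
      simp only [ite_eq_right_iff]
      rintro ⟨_, h2⟩
      omega
    have heq : Set.indicator {p | Nat.Prime p} (fun n : ℕ => (1:ℝ)/n)
        = fun n => f n + (if n.Prime ∧ n < K₀ then (1:ℝ)/n else 0) := by
      funext n
      rw [Set.indicator_apply, hfdef]
      by_cases h1 : n.Prime <;> by_cases h2 : K₀ ≤ n <;>
        simp [h1, h2, Set.mem_setOf_eq, not_le.mp] <;> omega
    rw [heq]
    exact hsum.add hg
  obtain ⟨nn, hnn⟩ :=
    (((not_summable_iff_tendsto_nat_atTop_of_nonneg hf0).mp hns).eventually_ge_atTop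
      (max 1 (128/ε^2))).exists
  set P : Finset ℕ := (Finset.range nn).filter (fun p => p.Prime ∧ K₀ ≤ p) with hPdef
  set L : ℝ := ∑ p ∈ P, (1:ℝ)/p with hLdef
  have hLeq : L = ∑ i ∈ Finset.range nn, f i := by
    rw [hLdef, hPdef, Finset.sum_filter]
  have hL1 : 1 ≤ L := by rw [hLeq]; exact (le_max_left _ _).trans hnn
  have hL128 : 128/ε^2 ≤ L := by rw [hLeq]; exact (le_max_right _ _).trans hnn
  have hLpos : (0:ℝ) < L := by linarith
  have hP : ∀ p ∈ P, p.Prime ∧ K ≤ p := by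
    intro p hp
    rw [hPdef, Finset.mem_filter] at hp
    exact ⟨hp.2.1, hK₀K.trans hp.2.2⟩
  have hPnotS : ∀ p ∈ P, ∀ q : ℕ, (p, q) ∉ S := by
    intro p hp q hmem
    rw [hPdef, Finset.mem_filter] at hp
    have h1 : max p q ≤ S.sup (fun s => max s.1 s.2) :=
      Finset.le_sup (f := fun s : ℕ × ℕ => max s.1 s.2) hmem
    have h2 : S.sup (fun s => max s.1 s.2) + 1 ≤ K₀ := le_max_right _ _
    have := hp.2.2
    omega
  -- eventual correlation bounds
  have hQ : ∀ᶠ N in atTop, ∀ p ∈ P, ∀ q ∈ P, p ≠ q →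
      ‖∑ m ∈ Icc 1 (min (N/p) (N/q)), F (p*m) * (starRingEnd ℂ) (F (q*m))‖
        ≤ 2*C/((p:ℝ)*q) * ((min (N/p) (N/q) : ℕ) : ℝ) := by
    rw [Filter.eventually_all_finset]
    intro p hp
    rw [Filter.eventually_all_finset]
    intro q hq
    by_cases hpq : p = q
    · exact Filter.Eventually.of_forall fun N h => absurd hpq h
    have hpp := (hP p hp).1
    have hqq := (hP q hq).1
    have hppos : 0 < p := hpp.pos
    have hqpos : 0 < q := hqq.pos
    have hpqR : (0:ℝ) < (p:ℝ)*q := by positivity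
    have hlim := hcorr p q hpp hqq hpq (hPnotS p hp q)
    have hbd : Filter.IsBoundedUnder (· ≤ ·) atTop
        (fun M : ℕ => (1/(M:ℝ)) * ‖∑ m ∈ Icc 1 M, F (p*m) * (starRingEnd ℂ) (F (q*m))‖) := by
      apply Filter.isBoundedUnder_of
      refine ⟨1, fun M => ?_⟩
      have h1 : ‖∑ m ∈ Icc 1 M, F (p*m) * (starRingEnd ℂ) (F (q*m))‖ ≤ (M:ℝ) := by
        refine (norm_sum_le _ _).trans ?_
        have hterm : ∀ m ∈ Icc 1 M, ‖F (p*m) * (starRingEnd ℂ) (F (q*m))‖ ≤ (1:ℝ) := by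
          intro m hm
          have hm1 := (Finset.mem_Icc.mp hm).1
          rw [norm_mul, RingHomIsometric.norm_map]
          exact mul_le_one₀ (hF _ (Nat.one_le_iff_ne_zero.mpr
              (Nat.mul_ne_zero hppos.ne' (by omega)))) (norm_nonneg _)
            (hF _ (Nat.one_le_iff_ne_zero.mpr (Nat.mul_ne_zero hqpos.ne' (by omega))))
        refine (Finset.sum_le_sum hterm).trans ?_
        rw [Finset.sum_const, Nat.card_Icc, nsmul_eq_mul, mul_one]
        simp
      calc (1/(M:ℝ)) * ‖∑ m ∈ Icc 1 M, F (p*m) * (starRingEnd ℂ) (F (q*m))‖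
          ≤ (1/(M:ℝ)) * M := by
            refine mul_le_mul_of_nonneg_left h1 (by positivity)
        _ ≤ 1 := by
            by_cases hM : M = 0
            · simp [hM]
            · rw [one_div, inv_mul_cancel₀ (by exact_mod_cast hM)]
    have hCC : C/((p:ℝ)*q) < 2*C/((p:ℝ)*q) := by
      apply div_lt_div_of_pos_right (by linarith) hpqR
    have hlt := lt_of_le_of_lt hlim hCC
    have hev := Filter.eventually_lt_of_limsup_lt hlt hbd
    obtain ⟨M₁, hM₁⟩ := Filter.eventually_atTop.mp hev
    filter_upwards [eventually_ge_atTop (M₁ * p), eventually_ge_atTop (M₁ * q)] with N h1 h2 _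
    by_cases hMn0 : min (N/p) (N/q) = 0
    · rw [hMn0]
      simp
    · have hMnge : M₁ ≤ min (N/p) (N/q) :=
        le_min ((Nat.le_div_iff_mul_le hppos).mpr h1) ((Nat.le_div_iff_mul_le hqpos).mpr h2)
      have h3 := (hM₁ _ hMnge).le
      have hMnR : (0:ℝ) < ((min (N/p) (N/q) : ℕ) : ℝ) := by
        exact_mod_cast Nat.pos_of_ne_zero hMn0
      rw [one_div, inv_mul_le_iff₀ hMnR] at h3
      calc ‖∑ m ∈ Icc 1 (min (N/p) (N/q)), F (p*m) * (starRingEnd ℂ) (F (q*m))‖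
          ≤ ((min (N/p) (N/q) : ℕ) : ℝ) * (2*C/((p:ℝ)*q)) := h3
        _ = 2*C/((p:ℝ)*q) * ((min (N/p) (N/q) : ℕ) : ℝ) := mul_comm _ _
  -- final assembly
  filter_upwards [hQ, eventually_ge_atTop 1, eventually_ge_atTop (2*P.card)] with N hQN hN1 hN2
  have hk := key F hF C hC P K hK1 hP N hN1 hN2 hQN
  rw [← hLdef] at hk
  clear_value L
  have hNR : (0:ℝ) < N := by exact_mod_cast hN1
  have hε2 : (0:ℝ) < ε^2 := by positivity
  have hKb' : (128:ℝ) ≤ ε^2 * K := by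
    rw [div_le_iff₀ hε2] at hKb; linarith
  have hL128' : (128:ℝ) ≤ ε^2 * L := by
    rw [div_le_iff₀ hε2] at hL128; linarith
  have s1 : Real.sqrt (2*L) ≤ ε/8*L := by
    have h : 2*L ≤ (ε/8*L)^2 := by nlinarith [mul_le_mul_of_nonneg_right hL128' hLpos.le]
    calc Real.sqrt (2*L) ≤ Real.sqrt ((ε/8*L)^2) := Real.sqrt_le_sqrt h
      _ = ε/8*L := Real.sqrt_sq (by positivity)
  have s2 : L/(K:ℝ) ≤ ε/8*L := by
    have h8 : (8:ℝ) ≤ ε * K := by rw [div_le_iff₀ hε] at hKa; linarith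
    rw [div_le_iff₀ hKR]
    nlinarith [mul_le_mul_of_nonneg_right h8 hLpos.le]
  have s3 : Real.sqrt (L/K + 2*C*L^2/K^2) ≤ ε/8*L := by
    have hK2 : 256*C ≤ ε^2*(K:ℝ)^2 := by
      have h0 : Real.sqrt (256*C) ≤ ε*K := by rw [div_le_iff₀ hε] at hKc; linarith
      have h1 : (Real.sqrt (256*C))^2 ≤ (ε*(K:ℝ))^2 :=
        pow_le_pow_left₀ (Real.sqrt_nonneg _) h0 2
      rw [Real.sq_sqrt (by positivity)] at h1
      calc (256:ℝ)*C ≤ (ε*(K:ℝ))^2 := h1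
        _ = ε^2*(K:ℝ)^2 := by ring
    have h2 : L/(K:ℝ) ≤ ε^2*L^2/128 := by
      rw [div_le_div_iff₀ hKR (by norm_num : (0:ℝ) < 128)]
      have a1 : L*128 ≤ L*(ε^2*K) := mul_le_mul_of_nonneg_left hKb' hLpos.le
      have a2 : L*(ε^2*(K:ℝ)) ≤ L*(ε^2*K)*L := le_mul_of_one_le_right (by positivity) hL1
      have a3 : L*(ε^2*(K:ℝ))*L = ε^2*L^2*K := by ring
      rw [a3] at a2
      linarith
    have h3 : 2*C*L^2/(K:ℝ)^2 ≤ ε^2*L^2/128 := by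
      rw [div_le_div_iff₀ (by positivity) (by norm_num : (0:ℝ) < 128)]
      have b1 := mul_le_mul_of_nonneg_left hK2 (sq_nonneg L)
      linarith [b1]
    have hbound : L/K + 2*C*L^2/(K:ℝ)^2 ≤ (ε/8*L)^2 := by
      calc L/(K:ℝ) + 2*C*L^2/(K:ℝ)^2 ≤ ε^2*L^2/128 + ε^2*L^2/128 := add_le_add h2 h3
        _ = (ε/8*L)^2 := by ring
    calc Real.sqrt (L/K + 2*C*L^2/K^2) ≤ Real.sqrt ((ε/8*L)^2) := Real.sqrt_le_sqrt hbound
      _ = ε/8*L := Real.sqrt_sq (by positivity)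
  have hfin : L * ‖∑ n ∈ Icc 1 N, (ArithmeticFunction.moebius n : ℂ) * F n‖
      ≤ (3*ε/8) * ((N:ℝ) * L) := by
    calc L * ‖∑ n ∈ Icc 1 N, (ArithmeticFunction.moebius n : ℂ) * F n‖
        ≤ (N:ℝ) * Real.sqrt (2*L) + N*L/K + N * Real.sqrt (L/K + 2*C*L^2/K^2) := hk
      _ ≤ (N:ℝ)*(ε/8*L) + N*(ε/8*L) + N*(ε/8*L) := by
          refine add_le_add (add_le_add ?_ ?_) ?_
          · exact mul_le_mul_of_nonneg_left s1 hNR.le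
          · rw [mul_div_assoc]; exact mul_le_mul_of_nonneg_left s2 hNR.le
          · exact mul_le_mul_of_nonneg_left s3 hNR.le
      _ = (3*ε/8) * ((N:ℝ) * L) := by ring
  have ha : ‖∑ n ∈ Icc 1 N, (ArithmeticFunction.moebius n : ℂ) * F n‖ ≤ 3*ε/8 * N := by
    have h1 : ‖∑ n ∈ Icc 1 N, (ArithmeticFunction.moebius n : ℂ) * F n‖ * L
        ≤ (3*ε/8*N) * L := by linarith [hfin]
    exact le_of_mul_le_mul_right h1 hLpos
  have hnorm : ‖(1/(N:ℂ)) * ∑ n ∈ Icc 1 N, (ArithmeticFunction.moebius n : ℂ) * F n‖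
      = (1/(N:ℝ)) * ‖∑ n ∈ Icc 1 N, (ArithmeticFunction.moebius n : ℂ) * F n‖ := by
    rw [norm_mul, norm_div, norm_one, Complex.norm_natCast]
  rw [hnorm]
  calc (1/(N:ℝ)) * ‖∑ n ∈ Icc 1 N, (ArithmeticFunction.moebius n : ℂ) * F n‖
      ≤ (1/(N:ℝ)) * (3*ε/8*N) := mul_le_mul_of_nonneg_left ha (by positivity)
    _ = 3*ε/8 := by field_simp
    _ < ε := by linarith
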